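/- arXiv:0801.1703 — 7 statements merged into one kernel-verified Lean document; each statement's English description precedes it below -/
import Mathlib

section
/- Let K_X be a real symmetric positive-definite N×N matrix and D > 0. Any minimizer K_{Z*} of log det(K_X + K_Z) − log det K_Z over real symmetric positive-definite N×N matrices K_Z satisfying tr(K_Z) ≤ N·D must satisfy tr(K_{Z*}) = N·D; that is, the trace (distortion) constraint is active at the optimum. -/
open Real Filter
open scoped ENNReal NNReal

noncomputable section

section Helpers
open Matrix
open scoped MatrixOrder

lemma posdef_smul' {n : ℕ} {M : Matrix (Fin n) (Fin n) ℝ} (hM : M.PosDef) {c : ℝ} (hc : 0 < c) :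
    (c • M).PosDef := by
  rw [posDef_iff_dotProduct_mulVec]
  constructor
  · show _ = _; rw [conjTranspose_smul, hM.1, star_trivial]
  · intro x hx
    simp only [smul_mulVec, dotProduct_smul, smul_eq_mul]
    exact mul_pos hc (hM.dotProduct_mulVec_pos hx)

-- congruence
lemma posdef_conj {n : ℕ} {E B : Matrix (Fin n) (Fin n) ℝ} (hE : E.PosDef) (hB : IsUnit B.det) :
    (Bᵀ * E * B).PosDef := by
  rw [posDef_iff_dotProduct_mulVec]
  constructor
  · have := Matrix.isHermitian_conjTranspose_mul_mul B hE.1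
    rwa [Matrix.conjTranspose_eq_transpose_of_trivial] at this
  · intro x hx
    have hBx : B *ᵥ x ≠ 0 := by
      intro h
      apply hx
      have := congrArg (fun v => B⁻¹ *ᵥ v) h
      simpa [Matrix.mulVec_mulVec, Matrix.nonsing_inv_mul B hB] using this
    have : star x ⬝ᵥ (Bᵀ * E * B) *ᵥ x = star (B *ᵥ x) ⬝ᵥ E *ᵥ (B *ᵥ x) := by
      simp only [star_trivial, ← Matrix.mulVec_mulVec]
      rw [Matrix.dotProduct_mulVec, Matrix.vecMul_transpose]
    rw [this]
    exact hE.dotProduct_mulVec_pos hBx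

lemma one_lt_det_one_add {n : ℕ} (hn : n ≠ 0) {M : Matrix (Fin n) (Fin n) ℝ} (hM : M.PosDef) :
    1 < (1 + M).det := by
  have hH := hM.1
  have hspec := hH.spectral_theorem
  rw [Unitary.conjStarAlgAut_apply] at hspec
  have hU : (hH.eigenvectorUnitary : Matrix (Fin n) (Fin n) ℝ) * (star hH.eigenvectorUnitary : Matrix (Fin n) (Fin n) ℝ) = 1 :=
    Matrix.mem_unitaryGroup_iff.mp hH.eigenvectorUnitary.2
  have key : (1 + M) = (hH.eigenvectorUnitary : Matrix (Fin n) (Fin n) ℝ) *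
      (1 + Matrix.diagonal (RCLike.ofReal ∘ hH.eigenvalues)) *
      (star hH.eigenvectorUnitary : Matrix (Fin n) (Fin n) ℝ) := by
    rw [Matrix.mul_add, Matrix.add_mul, Matrix.mul_one, hU, ← hspec]
  rw [key, Matrix.det_mul_right_comm, hU, Matrix.one_mul]
  have : (1 : Matrix (Fin n) (Fin n) ℝ) + Matrix.diagonal (RCLike.ofReal ∘ hH.eigenvalues)
      = Matrix.diagonal (fun i => 1 + hH.eigenvalues i) := by
    rw [← Matrix.diagonal_one, Matrix.diagonal_add]
    rfl
  rw [this, Matrix.det_diagonal]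
  have hne : Nonempty (Fin n) := ⟨⟨0, Nat.pos_of_ne_zero hn⟩⟩
  calc (1:ℝ) = ∏ _i : Fin n, 1 := by simp
    _ < ∏ i, (1 + hH.eigenvalues i) :=
      Finset.prod_lt_prod_of_nonempty (fun i _ => one_pos)
        (fun i _ => lt_add_of_pos_right 1 (hM.eigenvalues_pos i)) Finset.univ_nonempty

lemma det_lt_det_add {n : ℕ} (hn : n ≠ 0) {A E : Matrix (Fin n) (Fin n) ℝ} (hA : A.PosDef) (hE : E.PosDef) :
    A.det < (A + E).det := by
  have hAs := hA.posSemidef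
  set S := CFC.sqrt A with hSdef
  have hSps : S.PosSemidef := Matrix.nonneg_iff_posSemidef.mp (CFC.sqrt_nonneg A)
  have hSS : S * S = A := CFC.sqrt_mul_sqrt_self A (Matrix.nonneg_iff_posSemidef.mpr hAs)
  have hdet : S.det * S.det = A.det := by rw [← Matrix.det_mul, hSS]
  have hdS : S.det ≠ 0 := by
    intro h; rw [h, mul_zero] at hdet; exact (hA.det_pos).ne' hdet.symm
  have hdSu : IsUnit S.det := isUnit_iff_ne_zero.mpr hdS
  have hSinvH : S⁻¹.IsHermitian := hSps.1.inv
  have hSiT : S⁻¹ᵀ = S⁻¹ := by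
    have := hSinvH
    rwa [Matrix.IsHermitian, Matrix.conjTranspose_eq_transpose_of_trivial] at this
  have hM : (S⁻¹ᵀ * E * S⁻¹).PosDef := posdef_conj hE (by simpa using hdSu)
  rw [hSiT] at hM
  have key : A + E = S * (1 + S⁻¹ * E * S⁻¹) * S := by
    rw [Matrix.mul_add, Matrix.add_mul, Matrix.mul_one, hSS]
    congr 1
    rw [← Matrix.mul_assoc, ← Matrix.mul_assoc, Matrix.mul_nonsing_inv _ hdSu,
      Matrix.one_mul, Matrix.mul_assoc, Matrix.nonsing_inv_mul _ hdSu, Matrix.mul_one]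
  rw [key, Matrix.det_mul, Matrix.det_mul, mul_comm, ← mul_assoc, hdet]
  nlinarith [one_lt_det_one_add hn hM, hA.det_pos]

end Helpers

/-- Any minimizer of `log det(K_X + K_Z) - log det K_Z` over symmetric
positive-definite matrices `K_Z` with `tr K_Z ≤ N·D` has an active trace constraint:
`tr K_{Z*} = N·D`. -/
theorem stmt6 {N : ℕ} (K_X : Matrix (Fin N) (Fin N) ℝ) (hK : K_X.PosDef)
    (D : ℝ) (hD : 0 < D)
    (KZs : Matrix (Fin N) (Fin N) ℝ) (hKZs : KZs.PosDef) (htr : KZs.trace ≤ N * D)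
    (hmin : ∀ K_Z : Matrix (Fin N) (Fin N) ℝ, K_Z.PosDef → K_Z.trace ≤ N * D →
      Real.log (K_X + KZs).det - Real.log KZs.det
        ≤ Real.log (K_X + K_Z).det - Real.log K_Z.det) :
    KZs.trace = N * D := by
  rcases Nat.eq_zero_or_pos N with h0 | hNpos
  · subst h0
    simp [Matrix.trace]
  have hN : N ≠ 0 := hNpos.ne'
  by_contra hne
  have hlt : KZs.trace < N * D := lt_of_le_of_ne htr hne
  -- trace is positive
  have hdiag : ∀ i, 0 < KZs i i := by
    intro i
    exact hKZs.diag_pos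
  have htpos : 0 < KZs.trace := by
    have hne' : (Finset.univ : Finset (Fin N)).Nonempty :=
      Finset.univ_nonempty_iff.mpr ⟨⟨0, hNpos⟩⟩
    exact Finset.sum_pos (fun i _ => hdiag i) hne'
  set c : ℝ := (N * D) / KZs.trace with hc
  have hc1 : 1 < c := (one_lt_div htpos).mpr hlt
  have hc0 : 0 < c := lt_trans one_pos hc1
  have hKZc : (c • KZs).PosDef := posdef_smul' hKZs hc0
  have htrc : (c • KZs).trace ≤ N * D := by
    rw [Matrix.trace_smul, smul_eq_mul, hc, div_mul_cancel₀ _ htpos.ne']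
  have hle := hmin (c • KZs) hKZc htrc
  -- rewrite the objective at c • KZs
  have hsplit : K_X + c • KZs = c • (c⁻¹ • K_X + KZs) := by
    rw [smul_add, ← smul_assoc, smul_eq_mul, mul_inv_cancel₀ hc0.ne', one_smul]
  have hmix : (c⁻¹ • K_X + KZs).PosDef :=
    (posdef_smul' hK (inv_pos.mpr hc0)).add hKZs
  have hdetlt : (c⁻¹ • K_X + KZs).det < (K_X + KZs).det := by
    have hrw : K_X + KZs = (c⁻¹ • K_X + KZs) + (1 - c⁻¹) • K_X := by
      rw [add_right_comm, ← add_smul]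
      norm_num
    rw [hrw]
    exact det_lt_det_add hN hmix (posdef_smul' hK (by
      have : c⁻¹ < 1 := inv_lt_one_of_one_lt₀ hc1
      linarith))
  have hobj : Real.log (K_X + c • KZs).det - Real.log (c • KZs).det
      = Real.log (c⁻¹ • K_X + KZs).det - Real.log KZs.det := by
    rw [hsplit, Matrix.det_smul, Matrix.det_smul,
      Real.log_mul (by positivity) hmix.det_pos.ne',
      Real.log_mul (by positivity) hKZs.det_pos.ne']
    ring
  have hloglt : Real.log (c⁻¹ • K_X + KZs).det < Real.log (K_X + KZs).det :=
    Real.log_lt_log hmix.det_pos hdetlt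
  rw [hobj] at hle
  linarith

end
end

section
/- Let K_X be a real symmetric positive-definite N×N matrix and β > 0. A real symmetric positive-definite N×N matrix K_Z satisfies the stationarity equation (K_X + K_Z)^{-1} − K_Z^{-1} + β I = 0 if and only if K_Z = (1/2)√(K_X² + (4/β) K_X) − (1/2) K_X. -/
open Real Filter
open scoped ENNReal NNReal

noncomputable section

open scoped Matrix

lemma stmt7_commute_aux {N : ℕ} (K_X : Matrix (Fin N) (Fin N) ℝ) (hK : K_X.PosDef)
    (beta : ℝ) (hbeta : 0 < beta)
    (S : Matrix (Fin N) (Fin N) ℝ) (hS : S.PosSemidef)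
    (hS2 : S * S = K_X ^ 2 + (4 / beta) • K_X) :
    K_X * S = S * K_X := by
  classical
  have hH := hK.1
  set U : Matrix (Fin N) (Fin N) ℝ := (hH.eigenvectorUnitary : Matrix (Fin N) (Fin N) ℝ) with hUdef
  have hU1 : U * Uᴴ = 1 := by
    have := hH.eigenvectorUnitary.2
    rw [Matrix.mem_unitaryGroup_iff] at this
    simpa [Matrix.star_eq_conjTranspose] using this
  have hU2 : Uᴴ * U = 1 := by
    have := hH.eigenvectorUnitary.2
    rw [Matrix.mem_unitaryGroup_iff'] at this
    simpa [Matrix.star_eq_conjTranspose] using this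
  set lam := hH.eigenvalues with hlamdef
  have hlam : ∀ i, 0 < lam i := fun i => hK.eigenvalues_pos i
  have hspec : K_X = U * Matrix.diagonal lam * Uᴴ := by
    have := hH.spectral_theorem
    simpa [Matrix.star_eq_conjTranspose] using this
  have conj_mul : ∀ d₁ d₂ : Fin N → ℝ,
      (U * Matrix.diagonal d₁ * Uᴴ) * (U * Matrix.diagonal d₂ * Uᴴ)
        = U * Matrix.diagonal (fun i => d₁ i * d₂ i) * Uᴴ := by
    intro d₁ d₂
    calc (U * Matrix.diagonal d₁ * Uᴴ) * (U * Matrix.diagonal d₂ * Uᴴ)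
        = U * Matrix.diagonal d₁ * (Uᴴ * U) * Matrix.diagonal d₂ * Uᴴ := by
          simp only [Matrix.mul_assoc]
      _ = U * (Matrix.diagonal d₁ * Matrix.diagonal d₂) * Uᴴ := by
          rw [hU2]; simp only [Matrix.mul_one, Matrix.mul_assoc]
      _ = U * Matrix.diagonal (fun i => d₁ i * d₂ i) * Uᴴ := by
          rw [Matrix.diagonal_mul_diagonal]
  set d : Fin N → ℝ := fun i => Real.sqrt ((lam i)^2 + (4/beta) * lam i) with hddef
  set T := U * Matrix.diagonal d * Uᴴ with hTdef
  have hTpsd : T.PosSemidef :=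
    (Matrix.posSemidef_diagonal_iff.mpr fun i => Real.sqrt_nonneg _).mul_mul_conjTranspose_same U
  have hd2 : ∀ i, d i * d i = (lam i)^2 + (4/beta) * lam i := by
    intro i
    have h0 : 0 ≤ (lam i)^2 + (4/beta) * lam i := by
      have := hlam i; positivity
    exact Real.mul_self_sqrt h0
  have hTT : T * T = K_X ^ 2 + (4 / beta) • K_X := by
    rw [hTdef, conj_mul]
    have hfun : (fun i => d i * d i) = (fun i => lam i * lam i) + (4/beta) • lam := by
      funext i
      simp only [Pi.add_apply, Pi.smul_apply, smul_eq_mul, hd2 i]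
      ring
    have hdiag : (Matrix.diagonal (fun i => d i * d i) : Matrix (Fin N) (Fin N) ℝ)
        = Matrix.diagonal (fun i => lam i * lam i) + (4/beta) • Matrix.diagonal lam := by
      ext i j
      rcases eq_or_ne i j with h | h
      · subst h
        simp [Matrix.diagonal_apply_eq, hd2 i]
        ring
      · simp [Matrix.diagonal_apply_ne _ h]
    rw [hdiag, Matrix.mul_add, Matrix.add_mul, Matrix.mul_smul, Matrix.smul_mul]
    rw [← conj_mul lam lam, ← hspec, pow_two]
  have hST : S = T := open scoped MatrixOrder in
    (CFC.sq_eq_sq_iff S T hS.nonneg hTpsd.nonneg).mp (by rw [pow_two, pow_two, hS2, hTT])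
  rw [hST, hTdef, hspec, conj_mul, conj_mul]
  have : (fun i => lam i * d i) = fun i => d i * lam i := by funext i; ring
  rw [this]

/-- For symmetric positive-definite `K_X` and `β > 0`, a symmetric
positive-definite `K_Z` satisfies the stationarity equation
`(K_X + K_Z)⁻¹ - K_Z⁻¹ + β I = 0` iff `K_Z = (1/2)√(K_X² + (4/β)K_X) - (1/2)K_X`
(here `S` is the PSD square root of `K_X² + (4/β)K_X`). -/
theorem stmt7 {N : ℕ} (K_X : Matrix (Fin N) (Fin N) ℝ) (hK : K_X.PosDef)
    (beta : ℝ) (hbeta : 0 < beta)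
    (S : Matrix (Fin N) (Fin N) ℝ) (hS : S.PosSemidef)
    (hS2 : S * S = K_X ^ 2 + (4 / beta) • K_X)
    (K_Z : Matrix (Fin N) (Fin N) ℝ) (hKZ : K_Z.PosDef) :
    (K_X + K_Z)⁻¹ - K_Z⁻¹ + beta • (1 : Matrix (Fin N) (Fin N) ℝ) = 0 ↔
      K_Z = (1 / 2 : ℝ) • S - (1 / 2 : ℝ) • K_X := by
  set A := K_X + K_Z with hAdef
  have hA : A.PosDef := hK.add hKZ
  have hAdet : IsUnit A.det := hA.det_pos.ne'.isUnit
  have hZdet : IsUnit K_Z.det := hKZ.det_pos.ne'.isUnit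
  have hAinv : A * A⁻¹ = 1 := Matrix.mul_nonsing_inv _ hAdet
  have hAinv' : A⁻¹ * A = 1 := Matrix.nonsing_inv_mul _ hAdet
  have hZinv : K_Z * K_Z⁻¹ = 1 := Matrix.mul_nonsing_inv _ hZdet
  have hZinv' : K_Z⁻¹ * K_Z = 1 := Matrix.nonsing_inv_mul _ hZdet
  constructor
  · intro h
    -- multiply h on the left by A and on the right by K_Z
    have e1 : K_Z - A + beta • (A * K_Z) = 0 := by
      have h2 := congrArg (fun M => A * M * K_Z) h
      simp only [Matrix.mul_add, Matrix.mul_sub, Matrix.add_mul, Matrix.sub_mul,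
        Matrix.mul_smul, Matrix.smul_mul, Matrix.mul_one, Matrix.zero_mul,
        Matrix.mul_zero] at h2
      rw [hAinv, Matrix.one_mul, Matrix.mul_assoc A K_Z⁻¹ K_Z, hZinv',
        Matrix.mul_one] at h2
      exact h2
    -- multiply h on the left by K_Z and on the right by A
    have e2 : K_Z - A + beta • (K_Z * A) = 0 := by
      have h2 := congrArg (fun M => K_Z * M * A) h
      simp only [Matrix.mul_add, Matrix.mul_sub, Matrix.add_mul, Matrix.sub_mul,
        Matrix.mul_smul, Matrix.smul_mul, Matrix.mul_one, Matrix.zero_mul,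
        Matrix.mul_zero] at h2
      rw [hZinv, Matrix.one_mul, Matrix.mul_assoc K_Z A⁻¹ A, hAinv',
        Matrix.mul_one] at h2
      exact h2
    have hAcomm : A * K_Z = K_Z * A := by
      have h3 : beta • (A * K_Z) = beta • (K_Z * A) := by
        have : K_Z - A + beta • (A * K_Z) = K_Z - A + beta • (K_Z * A) := by
          rw [e1, e2]
        exact add_left_cancel this
      exact smul_right_injective _ hbeta.ne' h3
    have hcomm : K_Z * K_X = K_X * K_Z := by
      have h4 : K_X * K_Z + K_Z * K_Z = K_Z * K_X + K_Z * K_Z := by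
        have := hAcomm
        rw [hAdef, Matrix.add_mul, Matrix.mul_add] at this
        exact this
      exact (add_right_cancel h4).symm
    have h5 : beta • (K_X * K_Z + K_Z * K_Z) = K_X := by
      have h4 := e1
      rw [hAdef, Matrix.add_mul] at h4
      have : beta • (K_X * K_Z + K_Z * K_Z)
          = (K_Z - (K_X + K_Z) + beta • (K_X * K_Z + K_Z * K_Z)) + K_X := by abel
      rw [this, h4, zero_add]
    have hkey : K_X * K_Z + K_Z * K_Z = beta⁻¹ • K_X := by
      have h7 := congrArg (fun M => beta⁻¹ • M) h5
      simpa only [smul_smul, inv_mul_cancel₀ hbeta.ne', one_smul] using h7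
    set B := K_Z + (K_Z + K_X) with hBdef
    have hB : B.PosDef := hKZ.add (hKZ.add hK)
    have hBB : B * B = S * S := by
      have expand : B * B = K_X * K_X + (4 : ℝ) • (K_X * K_Z + K_Z * K_Z) := by
        rw [hBdef]
        simp only [Matrix.add_mul, Matrix.mul_add, hcomm]
        module
      rw [expand, hkey, hS2, pow_two, smul_smul]
      congr 1
    have hBS : B = S := open scoped MatrixOrder in
      (CFC.sq_eq_sq_iff B S hB.posSemidef.nonneg hS.nonneg).mp (by rw [pow_two, pow_two, hBB])
    rw [← hBS, hBdef]
    module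
  · intro h
    have hcomm0 : K_X * S = S * K_X := stmt7_commute_aux K_X hK beta hbeta S hS hS2
    have hBS : K_Z + (K_Z + K_X) = S := by rw [h]; module
    have hcomm : K_Z * K_X = K_X * K_Z := by
      rw [h, Matrix.sub_mul, Matrix.mul_sub, Matrix.smul_mul, Matrix.smul_mul,
        Matrix.mul_smul, Matrix.mul_smul, hcomm0]
    have expand : K_X * K_X + (4 : ℝ) • (K_X * K_Z + K_Z * K_Z)
        = K_X ^ 2 + (4 / beta) • K_X := by
      rw [← hS2, ← hBS]
      simp only [Matrix.add_mul, Matrix.mul_add, hcomm]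
      module
    have h6 : (4 : ℝ) • (K_X * K_Z + K_Z * K_Z) = (4 / beta) • K_X := by
      rw [pow_two] at expand
      exact add_left_cancel expand
    have h5 : beta • (K_X * K_Z + K_Z * K_Z) = K_X := by
      have h7 := congrArg (fun M => ((4 : ℝ)⁻¹ * beta) • M) h6
      simp only [smul_smul] at h7
      have c1 : (4 : ℝ)⁻¹ * beta * 4 = beta := by ring
      have c2 : (4 : ℝ)⁻¹ * beta * (4 / beta) = 1 := by field_simp
      rw [c1, c2, one_smul] at h7
      exact h7
    have hmid : K_Z - A + beta • (A * K_Z) = 0 := by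
      rw [hAdef, Matrix.add_mul, h5]
      abel
    calc A⁻¹ - K_Z⁻¹ + beta • (1 : Matrix (Fin N) (Fin N) ℝ)
        = A⁻¹ * (K_Z - A + beta • (A * K_Z)) * K_Z⁻¹ := by
          simp only [Matrix.mul_sub, Matrix.mul_add, Matrix.sub_mul, Matrix.add_mul,
            Matrix.mul_smul, Matrix.smul_mul]
          rw [Matrix.mul_assoc A⁻¹ K_Z K_Z⁻¹, hZinv, Matrix.mul_one, hAinv',
            Matrix.one_mul, ← Matrix.mul_assoc A⁻¹ A K_Z, hAinv', Matrix.one_mul, hZinv]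
      _ = 0 := by rw [hmid, Matrix.mul_zero, Matrix.zero_mul]

end
end

section
/- Let λ_1,…,λ_N be positive reals and define, for α > 0, D(α) = (1/(2N)) Σ_{k=1}^{N} ( √(λ_k² + λ_k α) − λ_k ) and R(α) = (1/N) Σ_{k=1}^{N} log( (√(λ_k + α) + √λ_k) / √α ). Then for every α > 0, R'(α) = −(1/(2Nα)) Σ_{k=1}^{N} √λ_k / √(λ_k + α), D'(α) = (1/(4N)) Σ_{k=1}^{N} √λ_k / √(λ_k + α), and consequently R'(α) = −(2/α) · D'(α); i.e., along the parametric curve (D(α), R(α)) the slope dR/dD equals −2/α. -/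
open Real Filter
open scoped ENNReal NNReal

noncomputable section

/-- The parametric rate and distortion functions `R(α)`, `D(α)` satisfy
`R'(α) = -(1/(2Nα)) Σ_k √λ_k/√(λ_k+α)`, `D'(α) = (1/(4N)) Σ_k √λ_k/√(λ_k+α)`, hence
`R'(α) = -(2/α) D'(α)`: the slope of the parametric curve `(D, R)` is `-2/α`. -/
theorem stmt10 {N : ℕ} (hN : 0 < N) (lam : Fin N → ℝ) (hlam : ∀ k, 0 < lam k) :
    ∀ alpha : ℝ, 0 < alpha →
      HasDerivAt
        (fun a : ℝ => (1 / (2 * N)) * ∑ k, (Real.sqrt (lam k ^ 2 + lam k * a) - lam k))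
        ((1 / (4 * N)) * ∑ k, Real.sqrt (lam k) / Real.sqrt (lam k + alpha)) alpha ∧
      HasDerivAt
        (fun a : ℝ => (1 / N) * ∑ k,
          Real.log ((Real.sqrt (lam k + a) + Real.sqrt (lam k)) / Real.sqrt a))
        (-(1 / (2 * N * alpha)) * ∑ k, Real.sqrt (lam k) / Real.sqrt (lam k + alpha)) alpha ∧
      -(1 / (2 * N * alpha)) * ∑ k, Real.sqrt (lam k) / Real.sqrt (lam k + alpha)
        = -(2 / alpha) *
          ((1 / (4 * N)) * ∑ k, Real.sqrt (lam k) / Real.sqrt (lam k + alpha)) := by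
  intro alpha halpha
  have hNR : (0:ℝ) < N := by exact_mod_cast hN
  refine ⟨?_, ?_, ?_⟩
  · -- D'
    have hD : HasDerivAt (fun a : ℝ => ∑ k, (Real.sqrt (lam k ^ 2 + lam k * a) - lam k))
        (∑ k, Real.sqrt (lam k) / (2 * Real.sqrt (lam k + alpha))) alpha := by
      apply HasDerivAt.fun_sum
      intro k _
      have hl := hlam k
      have h1 : HasDerivAt (fun a : ℝ => lam k ^ 2 + lam k * a) (lam k) alpha := by
        simpa using ((hasDerivAt_id alpha).const_mul (lam k)).const_add (lam k ^ 2)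
      have hpos : 0 < lam k ^ 2 + lam k * alpha := by positivity
      have h2 := (h1.sqrt hpos.ne').sub_const (lam k)
      convert h2 using 1
      have hs : Real.sqrt (lam k ^ 2 + lam k * alpha)
          = Real.sqrt (lam k) * Real.sqrt (lam k + alpha) := by
        rw [show lam k ^ 2 + lam k * alpha = lam k * (lam k + alpha) by ring,
          Real.sqrt_mul hl.le]
      rw [hs]
      have ht : Real.sqrt (lam k) * Real.sqrt (lam k) = lam k := Real.mul_self_sqrt hl.le
      have h3 : Real.sqrt (lam k) ≠ 0 := (Real.sqrt_pos.2 hl).ne'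
      have h4 : Real.sqrt (lam k + alpha) ≠ 0 := (Real.sqrt_pos.2 (by positivity)).ne'
      field_simp
      linear_combination ht
    have := hD.const_mul (1 / (2 * (N:ℝ)))
    convert this using 1
    · rfl
    · rfl
    rw [Finset.mul_sum, Finset.mul_sum]
    exact Finset.sum_congr rfl fun k _ => by ring
  · -- R'
    have hR : HasDerivAt
        (fun a : ℝ => ∑ k, Real.log ((Real.sqrt (lam k + a) + Real.sqrt (lam k)) / Real.sqrt a))
        (∑ k, -(1 / (2 * alpha)) * (Real.sqrt (lam k) / Real.sqrt (lam k + alpha))) alpha := by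
      apply HasDerivAt.fun_sum
      intro k _
      have hl := hlam k
      have hla : 0 < lam k + alpha := by positivity
      have hs : 0 < Real.sqrt (lam k + alpha) := Real.sqrt_pos.2 hla
      have ht : 0 < Real.sqrt (lam k) := Real.sqrt_pos.2 hl
      have hu : 0 < Real.sqrt alpha := Real.sqrt_pos.2 halpha
      have h1 : HasDerivAt (fun a : ℝ => lam k + a) 1 alpha := by
        simpa using (hasDerivAt_id alpha).const_add (lam k)
      have h2 := (h1.sqrt hla.ne').add_const (Real.sqrt (lam k))
      have h3 := h2.log (by positivity : Real.sqrt (lam k + alpha) + Real.sqrt (lam k) ≠ 0)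
      have h5 := (Real.hasDerivAt_sqrt halpha.ne').log hu.ne'
      have h6 := h3.sub h5
      have heq : (fun a : ℝ => Real.log ((Real.sqrt (lam k + a) + Real.sqrt (lam k)) / Real.sqrt a))
          =ᶠ[nhds alpha] fun a : ℝ =>
            Real.log (Real.sqrt (lam k + a) + Real.sqrt (lam k)) - Real.log (Real.sqrt a) := by
        filter_upwards [eventually_gt_nhds halpha] with a ha
        rw [Real.log_div (by positivity) (Real.sqrt_pos.2 ha).ne']
      have h7 := h6.congr_of_eventuallyEq heq
      convert h7 using 1
      have hs2 : Real.sqrt (lam k + alpha) * Real.sqrt (lam k + alpha) = lam k + alpha :=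
        Real.mul_self_sqrt hla.le
      have ht2 : Real.sqrt (lam k) * Real.sqrt (lam k) = lam k := Real.mul_self_sqrt hl.le
      have hu2 : Real.sqrt alpha * Real.sqrt alpha = alpha := Real.mul_self_sqrt halpha.le
      have hst : Real.sqrt (lam k + alpha) + Real.sqrt (lam k) ≠ 0 := by positivity
      field_simp
      linear_combination (-(Real.sqrt (lam k) * Real.sqrt (lam k + alpha))
          - Real.sqrt (lam k) ^ 2 - alpha) * hu2
        + alpha * hs2
        - alpha * ht2
    have := hR.const_mul (1 / (N:ℝ))
    convert this using 1
    · rfl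
    · rfl
    rw [Finset.mul_sum, Finset.mul_sum]
    exact Finset.sum_congr rfl fun k _ => by ring
  · field_simp
    ring
end
end

section
/- Let λ_1,…,λ_N be positive reals, and for α > 0 set D(α) = (1/(2N)) Σ_{k=1}^{N} ( √(λ_k² + λ_k α) − λ_k ) and R(α) = (1/N) Σ_{k=1}^{N} log( (√(λ_k + α) + √λ_k) / √α ). Define R^⊥ : (0,∞) → ℝ by R^⊥(D(α)) = R(α) (well defined since D is a strictly increasing bijection of (0,∞) onto itself). Then R^⊥ is strictly decreasing and convex on (0,∞). -/
open Real Filter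
open scoped ENNReal NNReal

noncomputable section

namespace Stmt11Aux

/-- The distortion function `D`. -/
def Dfun (N : ℕ) (lam : Fin N → ℝ) (a : ℝ) : ℝ :=
  (1 / (2 * N)) * ∑ k, (Real.sqrt (lam k ^ 2 + lam k * a) - lam k)

/-- The rate function `R`. -/
def Rfun (N : ℕ) (lam : Fin N → ℝ) (a : ℝ) : ℝ :=
  (1 / N) * ∑ k, Real.log ((Real.sqrt (lam k + a) + Real.sqrt (lam k)) / Real.sqrt a)

/-- An auxiliary sum appearing in both derivatives. -/
def Sfun (N : ℕ) (lam : Fin N → ℝ) (a : ℝ) : ℝ :=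
  ∑ k, Real.sqrt (lam k) / Real.sqrt (lam k + a)

variable {N : ℕ} {lam : Fin N → ℝ}

lemma Spos (hN : 0 < N) (hlam : ∀ k, 0 < lam k) {a : ℝ} (ha : 0 < a) :
    0 < Sfun N lam a := by
  haveI : Nonempty (Fin N) := ⟨⟨0, hN⟩⟩
  refine Finset.sum_pos (fun k _ => ?_) Finset.univ_nonempty
  have h1 : 0 < lam k := hlam k
  have h2 : 0 < lam k + a := by linarith
  positivity

lemma hasDerivD (hlam : ∀ k, 0 < lam k) {a : ℝ} (ha : 0 < a) :
    HasDerivAt (Dfun N lam) ((1 / (4 * N)) * Sfun N lam a) a := by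
  have hterm : ∀ k : Fin N, HasDerivAt (fun x => Real.sqrt (lam k ^ 2 + lam k * x) - lam k)
      (Real.sqrt (lam k) / Real.sqrt (lam k + a) / 2) a := by
    intro k
    have hl := hlam k
    have hpos : 0 < lam k ^ 2 + lam k * a := by positivity
    have h1 : HasDerivAt (fun x : ℝ => lam k ^ 2 + lam k * x) (lam k) a := by
      simpa using ((hasDerivAt_id a).const_mul (lam k)).const_add (lam k ^ 2)
    have h2 := (h1.sqrt hpos.ne').sub_const (lam k)
    refine h2.congr_deriv ?_
    symm
    have hsq : Real.sqrt (lam k ^ 2 + lam k * a) = Real.sqrt (lam k) * Real.sqrt (lam k + a) := by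
      rw [show lam k ^ 2 + lam k * a = lam k * (lam k + a) by ring, Real.sqrt_mul hl.le]
    rw [hsq]
    have hs : 0 < Real.sqrt (lam k) := Real.sqrt_pos.2 hl
    have ht : 0 < Real.sqrt (lam k + a) := Real.sqrt_pos.2 (by linarith)
    have hss : Real.sqrt (lam k) * Real.sqrt (lam k) = lam k := Real.mul_self_sqrt hl.le
    field_simp
    nlinarith [hss]
  have hsum : HasDerivAt (fun x => ∑ k, (Real.sqrt (lam k ^ 2 + lam k * x) - lam k))
      (∑ k, Real.sqrt (lam k) / Real.sqrt (lam k + a) / 2) a :=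
    HasDerivAt.fun_sum (fun k _ => hterm k)
  have hfin := hsum.const_mul (1 / (2 * (N : ℝ)))
  refine hfin.congr_deriv ?_
  symm
  rw [Sfun, ← Finset.sum_div]
  ring

lemma hasDerivR (hlam : ∀ k, 0 < lam k) {a : ℝ} (ha : 0 < a) :
    HasDerivAt (Rfun N lam) (-(1 / (2 * N * a)) * Sfun N lam a) a := by
  have hterm : ∀ k : Fin N, HasDerivAt
      (fun x => Real.log ((Real.sqrt (lam k + x) + Real.sqrt (lam k)) / Real.sqrt x))
      (-(Real.sqrt (lam k) / Real.sqrt (lam k + a)) / (2 * a)) a := by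
    intro k
    have hl := hlam k
    have hla : 0 < lam k + a := by linarith
    have hs : 0 < Real.sqrt (lam k + a) := Real.sqrt_pos.2 hla
    have ht : 0 < Real.sqrt (lam k) := Real.sqrt_pos.2 hl
    have hra : 0 < Real.sqrt a := Real.sqrt_pos.2 ha
    -- the split function
    have h1 : HasDerivAt (fun x : ℝ => Real.sqrt (lam k + x) + Real.sqrt (lam k))
        (1 / (2 * Real.sqrt (lam k + a))) a := by
      have := (((hasDerivAt_id a).const_add (lam k)).sqrt hla.ne').add_const (Real.sqrt (lam k))
      simpa using this
    have h2 : HasDerivAt (fun x : ℝ =>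
        Real.log (Real.sqrt (lam k + x) + Real.sqrt (lam k)))
        ((1 / (2 * Real.sqrt (lam k + a))) / (Real.sqrt (lam k + a) + Real.sqrt (lam k))) a :=
      h1.log (by positivity)
    have h3 : HasDerivAt (fun x : ℝ => Real.log (Real.sqrt x))
        ((1 / (2 * Real.sqrt a)) / Real.sqrt a) a :=
      (Real.hasDerivAt_sqrt ha.ne').log hra.ne'
    have h4 := h2.sub h3
    have heq : (fun x => Real.log ((Real.sqrt (lam k + x) + Real.sqrt (lam k)) / Real.sqrt x))
        =ᶠ[nhds a] (fun x => Real.log (Real.sqrt (lam k + x) + Real.sqrt (lam k))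
          - Real.log (Real.sqrt x)) := by
      filter_upwards [isOpen_Ioi.mem_nhds (Set.mem_Ioi.2 ha)] with x hx
      have hx : (0 : ℝ) < x := hx
      have hlx : 0 < lam k + x := by linarith
      rw [Real.log_div (by positivity) (by positivity)]
    have h5 := h4.congr_of_eventuallyEq heq
    refine h5.congr_deriv ?_
    symm
    have hss : Real.sqrt (lam k + a) * Real.sqrt (lam k + a) = lam k + a :=
      Real.mul_self_sqrt hla.le
    have htt : Real.sqrt (lam k) * Real.sqrt (lam k) = lam k := Real.mul_self_sqrt hl.le
    have haa : Real.sqrt a * Real.sqrt a = a := Real.mul_self_sqrt ha.le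
    have hst : 0 < Real.sqrt (lam k + a) + Real.sqrt (lam k) := by positivity
    have hs' := hs.ne'
    have ht' := ht.ne'
    have hra' := hra.ne'
    have hst' := hst.ne'
    have ha' := ha.ne'
    field_simp
    linear_combination (-(Real.sqrt (lam k)*Real.sqrt (lam k+a)) - Real.sqrt (lam k)^2 - a) * haa
      + a * hss - a * htt
  have hsum : HasDerivAt
      (fun x => ∑ k, Real.log ((Real.sqrt (lam k + x) + Real.sqrt (lam k)) / Real.sqrt x))
      (∑ k, -(Real.sqrt (lam k) / Real.sqrt (lam k + a)) / (2 * a)) a :=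
    HasDerivAt.fun_sum (fun k _ => hterm k)
  have hfin := hsum.const_mul (1 / (N : ℝ))
  refine hfin.congr_deriv ?_
  symm
  rw [Sfun, Finset.mul_sum, Finset.mul_sum]
  refine Finset.sum_congr rfl fun k _ => ?_
  have hNa : (2 : ℝ) * N * a ≠ 0 ∨ True := Or.inr trivial
  by_cases hN0 : (N : ℝ) = 0
  · simp [hN0]
  · field_simp

lemma D_strictMono (hN : 0 < N) (hlam : ∀ k, 0 < lam k) {a b : ℝ}
    (ha : 0 < a) (hab : a < b) : Dfun N lam a < Dfun N lam b := by
  obtain ⟨c, hc, hceq⟩ := exists_hasDerivAt_eq_slope (Dfun N lam)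
    (fun x => (1 / (4 * N)) * Sfun N lam x) hab
    (fun x hx => ((hasDerivD hlam (lt_of_lt_of_le ha hx.1)).continuousAt).continuousWithinAt)
    (fun x hx => hasDerivD hlam (lt_trans ha hx.1))
  have hc0 : 0 < c := lt_trans ha hc.1
  have hS := Spos hN hlam hc0
  have hpos : 0 < (1 / (4 * (N : ℝ))) * Sfun N lam c := by
    have : (0 : ℝ) < (N : ℝ) := by exact_mod_cast hN
    positivity
  rw [hceq] at hpos
  have := hpos
  rw [div_pos_iff] at this
  rcases this with ⟨h1, _⟩ | ⟨_, h2⟩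
  · linarith
  · linarith
lemma slope_eq (hN : 0 < N) (hlam : ∀ k, 0 < lam k) {a b : ℝ}
    (ha : 0 < a) (hab : a < b) :
    ∃ c, a < c ∧ c < b ∧
      Rfun N lam b - Rfun N lam a = -(2 / c) * (Dfun N lam b - Dfun N lam a) := by
  obtain ⟨c, hc, hceq⟩ := exists_ratio_hasDerivAt_eq_ratio_slope (Rfun N lam)
    (fun x => -(1 / (2 * N * x)) * Sfun N lam x) hab
    (fun x hx => ((hasDerivR hlam (lt_of_lt_of_le ha hx.1)).continuousAt).continuousWithinAt)
    (fun x hx => hasDerivR hlam (lt_trans ha hx.1))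
    (Dfun N lam) (fun x => (1 / (4 * N)) * Sfun N lam x)
    (fun x hx => ((hasDerivD hlam (lt_of_lt_of_le ha hx.1)).continuousAt).continuousWithinAt)
    (fun x hx => hasDerivD hlam (lt_trans ha hx.1))
  refine ⟨c, hc.1, hc.2, ?_⟩
  have hc0 : 0 < c := lt_trans ha hc.1
  have hS : 0 < Sfun N lam c := Spos hN hlam hc0
  have hNpos : (0 : ℝ) < (N : ℝ) := by exact_mod_cast hN
  have h4 : (1 / (4 * (N : ℝ))) * Sfun N lam c ≠ 0 := by positivity
  have h4 : (1 / (4 * (N : ℝ))) * Sfun N lam c ≠ 0 := ne_of_gt (by positivity)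
  have hQ : Rfun N lam b - Rfun N lam a =
      (Dfun N lam b - Dfun N lam a) * (-(1 / (2 * ↑N * c)) * Sfun N lam c) /
        (1 / (4 * ↑N) * Sfun N lam c) := by
    rw [eq_div_iff h4]; linarith [hceq]
  rw [hQ]
  have hS' := hS.ne'
  have hc' := hc0.ne'
  have hN' := hNpos.ne'
  field_simp
  ring

lemma D_surj (hN : 0 < N) (hlam : ∀ k, 0 < lam k) {y : ℝ} (hy : 0 < y) :
    ∃ a, 0 < a ∧ Dfun N lam a = y := by
  have hcont : Continuous (Dfun N lam) := by
    unfold Dfun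
    refine continuous_const.mul (continuous_finset_sum _ fun k _ => ?_)
    exact ((continuous_const.add (continuous_const.mul continuous_id)).sqrt).sub continuous_const
  have hD0 : Dfun N lam 0 = 0 := by
    rw [Dfun, Finset.sum_eq_zero, mul_zero]
    intro k _
    rw [mul_zero, add_zero, Real.sqrt_sq (hlam k).le, sub_self]
  have hNpos : (0 : ℝ) < (N : ℝ) := by exact_mod_cast hN
  set k0 : Fin N := ⟨0, hN⟩
  have hL0 : 0 < lam k0 := hlam k0
  set L := lam k0 with hL
  have h2Ny : 0 < 2 * (N : ℝ) * y := by positivity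
  set M : ℝ := ((2 * N * y + L) ^ 2 - L ^ 2 + L) / L with hM
  have hM0 : 0 < M := div_pos (by nlinarith) hL0
  have hLM : L ^ 2 + L * M = (2 * N * y + L) ^ 2 + L := by
    rw [hM]; field_simp; ring
  have hDM : y < Dfun N lam M := by
    have hsingle : Real.sqrt (L ^ 2 + L * M) - L ≤
        ∑ k, (Real.sqrt (lam k ^ 2 + lam k * M) - lam k) := by
      refine Finset.single_le_sum (f := fun k => Real.sqrt (lam k ^ 2 + lam k * M) - lam k)
        (fun k _ => ?_) (Finset.mem_univ k0)
      have hk := hlam k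
      have : lam k ≤ Real.sqrt (lam k ^ 2 + lam k * M) := by
        rw [Real.le_sqrt' hk]
        nlinarith
      show (0:ℝ) ≤ Real.sqrt (lam k ^ 2 + lam k * M) - lam k
      linarith
    have hbig : 2 * N * y + L < Real.sqrt (L ^ 2 + L * M) := by
      rw [Real.lt_sqrt (by positivity)]
      rw [hLM]
      linarith
    have h2 : 2 * N * y < ∑ k, (Real.sqrt (lam k ^ 2 + lam k * M) - lam k) := by linarith
    rw [Dfun]
    rw [show y = (1 / (2 * (N:ℝ))) * (2 * N * y) by field_simp]
    have hc : (0 : ℝ) < 1 / (2 * (N : ℝ)) := by positivity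
    exact (mul_lt_mul_iff_right₀ hc).2 h2
  obtain ⟨c, hc, hceq⟩ := intermediate_value_Icc (by linarith : (0:ℝ) ≤ M)
    hcont.continuousOn (by rw [hD0]; exact ⟨hy.le, hDM.le⟩)
  refine ⟨c, ?_, hceq⟩
  rcases hc.1.lt_or_eq with h | h
  · exact h
  · exfalso; rw [← h, hD0] at hceq; linarith

lemma lt_of_D_lt (hN : 0 < N) (hlam : ∀ k, 0 < lam k) {a b : ℝ}
    (ha : 0 < a) (hb : 0 < b) (hD : Dfun N lam a < Dfun N lam b) : a < b := by
  rcases lt_trichotomy a b with h | h | h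
  · exact h
  · exfalso; rw [h] at hD; exact lt_irrefl _ hD
  · exfalso; exact absurd hD (not_lt.2 (D_strictMono hN hlam hb h).le)

end Stmt11Aux

open Stmt11Aux in
/-- The function `R^⊥` defined on `(0,∞)` by `R^⊥(D(α)) = R(α)` (any
function satisfying this relation) is strictly decreasing and convex on `(0,∞)`. -/
theorem stmt11 {N : ℕ} (hN : 0 < N) (lam : Fin N → ℝ) (hlam : ∀ k, 0 < lam k)
    (Rp : ℝ → ℝ)
    (hRp : ∀ alpha : ℝ, 0 < alpha →
      Rp ((1 / (2 * N)) * ∑ k, (Real.sqrt (lam k ^ 2 + lam k * alpha) - lam k))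
        = (1 / N) * ∑ k,
            Real.log ((Real.sqrt (lam k + alpha) + Real.sqrt (lam k)) / Real.sqrt alpha)) :
    StrictAntiOn Rp (Set.Ioi 0) ∧ ConvexOn ℝ (Set.Ioi 0) Rp := by
  have hRp' : ∀ a : ℝ, 0 < a → Rp (Dfun N lam a) = Rfun N lam a := fun a ha => hRp a ha
  constructor
  · intro x hx y hy hxy
    obtain ⟨a, ha, hDa⟩ := D_surj hN hlam (Set.mem_Ioi.1 hx)
    obtain ⟨b, hb, hDb⟩ := D_surj hN hlam (Set.mem_Ioi.1 hy)
    have hab : a < b := lt_of_D_lt hN hlam ha hb (by rw [hDa, hDb]; exact hxy)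
    obtain ⟨c, hc1, hc2, hslope⟩ := slope_eq hN hlam ha hab
    have hc0 : 0 < c := lt_trans ha hc1
    have hDlt : Dfun N lam a < Dfun N lam b := D_strictMono hN hlam ha hab
    have hRlt : Rfun N lam b < Rfun N lam a := by nlinarith [div_pos (by norm_num : (0:ℝ)<2) hc0]
    rw [← hDa, ← hDb, hRp' a ha, hRp' b hb]
    exact hRlt
  · refine convexOn_of_slope_mono_adjacent (convex_Ioi 0) ?_
    intro x y z hx hz hxy hyz
    have hy : y ∈ Set.Ioi (0:ℝ) := Set.mem_Ioi.2 (lt_trans (Set.mem_Ioi.1 hx) hxy)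
    obtain ⟨a, ha, hDa⟩ := D_surj hN hlam (Set.mem_Ioi.1 hx)
    obtain ⟨b, hb, hDb⟩ := D_surj hN hlam (Set.mem_Ioi.1 hy)
    obtain ⟨c, hc, hDc⟩ := D_surj hN hlam (Set.mem_Ioi.1 hz)
    have hab : a < b := lt_of_D_lt hN hlam ha hb (by rw [hDa, hDb]; exact hxy)
    have hbc : b < c := lt_of_D_lt hN hlam hb hc (by rw [hDb, hDc]; exact hyz)
    obtain ⟨c1, hc11, hc12, hs1⟩ := slope_eq hN hlam ha hab
    obtain ⟨c2, hc21, hc22, hs2⟩ := slope_eq hN hlam hb hbc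
    have hc10 : 0 < c1 := lt_trans ha hc11
    have hc20 : 0 < c2 := lt_trans hb hc21
    have hD1 : Dfun N lam a < Dfun N lam b := D_strictMono hN hlam ha hab
    have hD2 : Dfun N lam b < Dfun N lam c := D_strictMono hN hlam hb hbc
    rw [← hDa, ← hDb, ← hDc, hRp' a ha, hRp' b hb, hRp' c hc]
    rw [hs1, hs2]
    rw [mul_div_assoc, mul_div_assoc,
      div_self (by linarith : Dfun N lam b - Dfun N lam a ≠ 0),
      div_self (by linarith : Dfun N lam c - Dfun N lam b ≠ 0), mul_one, mul_one]
    have h12 : c1 < c2 := lt_trans hc12 hc21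
    have : 2 / c2 ≤ 2 / c1 :=
      div_le_div_of_nonneg_left (by norm_num) hc10 h12.le
    linarith

end
end

section
/- Let S_X : [−π, π] → ℝ be a measurable, Lebesgue-integrable function with S_X(ω) > 0 for almost every ω. Then for each D > 0 there exists a unique α > 0 such that D = (1/(4π)) ∫_{−π}^{π} ( √(S_X(ω) + α) − √(S_X(ω)) ) √(S_X(ω)) dω; equivalently, the map α ↦ (1/(4π)) ∫_{−π}^{π} ( √(S_X(ω)+α) − √(S_X(ω)) ) √(S_X(ω)) dω is a strictly increasing bijection from (0,∞) onto (0,∞). -/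
open Real Filter MeasureTheory
open scoped ENNReal NNReal

noncomputable section

/-- For an integrable spectral density `S_X` on `[-π,π]` which is positive
almost everywhere, for each `D > 0` there is a unique `α > 0` with
`D = (1/(4π)) ∫_{-π}^{π} (√(S_X(ω)+α) - √(S_X(ω))) √(S_X(ω)) dω`. -/
theorem stmt13 (S : ℝ → ℝ) (hmeas : Measurable S)
    (hint : IntegrableOn S (Set.Icc (-Real.pi) Real.pi))
    (hpos : ∀ᵐ om ∂(volume.restrict (Set.Icc (-Real.pi) Real.pi)), 0 < S om) :
    ∀ D : ℝ, 0 < D → ∃! alpha : ℝ, 0 < alpha ∧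
      D = (1 / (4 * Real.pi)) * ∫ om in (-Real.pi)..Real.pi,
        (Real.sqrt (S om + alpha) - Real.sqrt (S om)) * Real.sqrt (S om) := by
  have hπ := Real.pi_pos
  have hπ' : Real.pi ≠ 0 := ne_of_gt hπ
  set μ : Measure ℝ := volume.restrict (Set.Icc (-Real.pi) Real.pi) with hμdef
  haveI : IsFiniteMeasure μ := ⟨by
    rw [hμdef, Measure.restrict_apply_univ]; exact measure_Icc_lt_top⟩
  have hμuniv : (μ Set.univ).toReal = 2 * Real.pi := by
    rw [hμdef, Measure.restrict_apply_univ, Real.volume_Icc]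
    rw [ENNReal.toReal_ofReal (by linarith)]; ring
  set g : ℝ → ℝ → ℝ := fun α ω =>
    (Real.sqrt (S ω + α) - Real.sqrt (S ω)) * Real.sqrt (S ω) with hgdef
  have hgmeas : ∀ α : ℝ, Measurable (g α) := fun α =>
    ((hmeas.add_const α).sqrt.sub hmeas.sqrt).mul hmeas.sqrt
  have hptb : ∀ α : ℝ, 0 ≤ α → ∀ s : ℝ, 0 < s →
      |(Real.sqrt (s + α) - Real.sqrt s) * Real.sqrt s| ≤ α / 2 := by
    intro α hα s hs
    have hu := Real.sqrt_nonneg s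
    have huv : Real.sqrt s ≤ Real.sqrt (s + α) := Real.sqrt_le_sqrt (by linarith)
    have hu2 : Real.sqrt s ^ 2 = s := Real.sq_sqrt hs.le
    have hv2 : Real.sqrt (s + α) ^ 2 = s + α := Real.sq_sqrt (by linarith)
    rw [abs_of_nonneg (mul_nonneg (by linarith) hu)]
    nlinarith [sq_nonneg (Real.sqrt (s + α) - Real.sqrt s)]
  have hgint : ∀ α : ℝ, 0 ≤ α → Integrable (g α) μ := by
    intro α hα
    refine Integrable.mono' (integrable_const (α / 2)) (hgmeas α).aestronglyMeasurable ?_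
    filter_upwards [hpos] with ω hω
    rw [Real.norm_eq_abs]
    exact hptb α hα (S ω) hω
  set F : ℝ → ℝ := fun α => (1 / (4 * Real.pi)) * ∫ ω, g α ω ∂μ with hFdef
  have hFeq : ∀ α : ℝ,
      (1 / (4 * Real.pi)) * ∫ om in (-Real.pi)..Real.pi, g α om = F α := by
    intro α
    rw [hFdef]
    congr 1
    rw [intervalIntegral.integral_of_le (by linarith), hμdef,
      ← MeasureTheory.integral_Icc_eq_integral_Ioc]
  have hintpos : ∀ f : ℝ → ℝ, Integrable f μ → (∀ᵐ x ∂μ, 0 < f x) →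
      0 < ∫ x, f x ∂μ := by
    intro f hf h
    rw [MeasureTheory.integral_pos_iff_support_of_nonneg_ae
      (h.mono fun x hx => hx.le) hf]
    have hc : μ (Function.support f)ᶜ = 0 := by
      refine measure_mono_null ?_ (ae_iff.mp h)
      intro x hx
      simp only [Set.mem_compl_iff, Function.mem_support, not_not] at hx
      simp [hx]
    by_contra hsupp
    push_neg at hsupp
    have h0 : μ (Function.support f) = 0 := le_antisymm hsupp zero_le
    have hle : μ Set.univ ≤ μ (Function.support f) + μ (Function.support f)ᶜ := by
      rw [← Set.union_compl_self (Function.support f)]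
      exact measure_union_le _ _
    rw [h0, hc, add_zero] at hle
    have huniv : μ Set.univ = ENNReal.ofReal (2 * Real.pi) := by
      rw [hμdef, Measure.restrict_apply_univ, Real.volume_Icc]
      congr 1; ring
    rw [huniv] at hle
    simp only [nonpos_iff_eq_zero, ENNReal.ofReal_eq_zero] at hle
    linarith
  -- strict monotonicity of F on Ici 0
  have hmono : StrictMonoOn F (Set.Ici 0) := by
    intro a ha b hb hab
    simp only [Set.mem_Ici] at ha hb
    have hdiff : 0 < ∫ ω, (g b ω - g a ω) ∂μ := by
      refine hintpos _ ((hgint b hb).sub (hgint a ha)) ?_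
      filter_upwards [hpos] with ω hω
      have h1 : Real.sqrt (S ω + a) < Real.sqrt (S ω + b) :=
        Real.sqrt_lt_sqrt (by linarith) (by linarith)
      have h2 : 0 < Real.sqrt (S ω) := Real.sqrt_pos.mpr hω
      simp only [hgdef]
      nlinarith [mul_pos (sub_pos.mpr h1) h2]
    rw [integral_sub (hgint b hb) (hgint a ha)] at hdiff
    simp only [hFdef]
    exact mul_lt_mul_of_pos_left (by linarith) (by positivity)
  -- Lipschitz estimate for F on Ici 0
  have hlip : ∀ x ∈ Set.Ici (0:ℝ), ∀ y ∈ Set.Ici (0:ℝ),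
      dist (F x) (F y) ≤ (1/2 : ℝ) * dist x y := by
    intro x hx y hy
    simp only [Set.mem_Ici] at hx hy
    have hsub : ∀ᵐ ω ∂μ, ‖g x ω - g y ω‖ ≤ |x - y| / 2 := by
      filter_upwards [hpos] with ω hω
      set u := Real.sqrt (S ω) with hu_def
      set a := Real.sqrt (S ω + x) with ha_def
      set b := Real.sqrt (S ω + y) with hb_def
      have hu : 0 ≤ u := Real.sqrt_nonneg _
      have hu2 : u ^ 2 = S ω := Real.sq_sqrt hω.le
      have ha2 : a ^ 2 = S ω + x := Real.sq_sqrt (by linarith)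
      have hb2 : b ^ 2 = S ω + y := Real.sq_sqrt (by linarith)
      have hau : u ≤ a := Real.sqrt_le_sqrt (by linarith)
      have hbu : u ≤ b := Real.sqrt_le_sqrt (by linarith)
      have hgg : g x ω - g y ω = (a - b) * u := by
        simp only [hgdef]; ring
      rw [Real.norm_eq_abs, hgg]
      have h1 : |a - b| * (a + b) = |x - y| := by
        rw [← abs_of_nonneg (show (0:ℝ) ≤ a + b by linarith), ← abs_mul]
        congr 1
        linear_combination ha2 - hb2
      have h2 : |a - b| * (2 * u) ≤ |a - b| * (a + b) :=
        mul_le_mul_of_nonneg_left (by linarith) (abs_nonneg _)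
      rw [abs_mul, abs_of_nonneg hu]
      nlinarith [h1, h2]
    have hnormint : ‖∫ ω, (g x ω - g y ω) ∂μ‖ ≤ (|x - y| / 2) * (2 * Real.pi) := by
      have h := MeasureTheory.norm_integral_le_of_norm_le_const hsub
      rwa [measureReal_def, hμuniv] at h
    rw [integral_sub (hgint x hx) (hgint y hy), Real.norm_eq_abs] at hnormint
    simp only [hFdef, Real.dist_eq]
    rw [← mul_sub, abs_mul, abs_of_nonneg (by positivity : (0:ℝ) ≤ 1 / (4 * Real.pi))]
    calc (1 / (4 * Real.pi)) * |(∫ ω, g x ω ∂μ) - ∫ ω, g y ω ∂μ|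
        ≤ (1 / (4 * Real.pi)) * ((|x - y| / 2) * (2 * Real.pi)) :=
          mul_le_mul_of_nonneg_left hnormint (by positivity)
      _ = |x - y| / 4 := by field_simp
      _ ≤ (1/2 : ℝ) * |x - y| := by linarith [abs_nonneg (x - y)]
  have hcont : ContinuousOn F (Set.Ici 0) := by
    have hL : LipschitzOnWith (1/2 : ℝ≥0) F (Set.Ici 0) := by
      apply LipschitzOnWith.of_dist_le_mul
      intro x hx y hy
      have h := hlip x hx y hy
      have : ((1/2 : ℝ≥0) : ℝ) = (1/2 : ℝ) := by norm_num
      rw [this]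
      exact h
    exact hL.continuousOn
  intro D hD
  have hupper : ∀ α : ℝ, 0 ≤ α → F α ≤ α / 4 := by
    intro α hα
    have hb : ∀ᵐ ω ∂μ, ‖g α ω‖ ≤ α / 2 := by
      filter_upwards [hpos] with ω hω
      rw [Real.norm_eq_abs]; exact hptb α hα (S ω) hω
    have h := MeasureTheory.norm_integral_le_of_norm_le_const hb
    rw [measureReal_def, hμuniv, Real.norm_eq_abs] at h
    have h1 : (∫ ω, g α ω ∂μ) ≤ α / 2 * (2 * Real.pi) := (abs_le.mp h).2
    simp only [hFdef]
    calc (1 / (4 * Real.pi)) * ∫ ω, g α ω ∂μ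
        ≤ (1 / (4 * Real.pi)) * (α / 2 * (2 * Real.pi)) :=
          mul_le_mul_of_nonneg_left h1 (by positivity)
      _ = α / 4 := by field_simp
  have hF2D : F (2 * D) < D := lt_of_le_of_lt (hupper (2 * D) (by linarith)) (by linarith)
  have hb1 : Integrable (fun ω => S ω + 1) μ := by
    exact hint.add (integrable_const 1)
  have hsqrtint : Integrable (fun ω => Real.sqrt (S ω)) μ := by
    refine Integrable.mono' hb1 hmeas.sqrt.aestronglyMeasurable ?_
    filter_upwards [hpos] with ω hω
    have hu2 : Real.sqrt (S ω) ^ 2 = S ω := Real.sq_sqrt hω.le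
    have hu := Real.sqrt_nonneg (S ω)
    rw [Real.norm_eq_abs, abs_of_nonneg hu]
    nlinarith [sq_nonneg (Real.sqrt (S ω) - 1)]
  set Iq : ℝ := ∫ ω, Real.sqrt (S ω) ∂μ with hIqdef
  set J : ℝ := ∫ ω, S ω ∂μ with hJdef
  have hIqpos : 0 < Iq := by
    refine hintpos _ hsqrtint ?_
    filter_upwards [hpos] with ω hω
    exact Real.sqrt_pos.mpr hω
  have hJnn : 0 ≤ J := integral_nonneg_of_ae (hpos.mono fun ω hω => hω.le)
  set c : ℝ := (4 * Real.pi * D + J) / Iq + 1 with hcdef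
  have hc : 0 < c := by positivity
  set b : ℝ := c ^ 2 with hbdef
  have hbpos : 0 < b := by positivity
  have hFb : D < F b := by
    have hpw : ∀ᵐ ω ∂μ, c * Real.sqrt (S ω) - S ω ≤ g b ω := by
      filter_upwards [hpos] with ω hω
      have h1 : c ≤ Real.sqrt (S ω + b) := by
        rw [← Real.sqrt_sq hc.le]
        exact Real.sqrt_le_sqrt (by simp only [hbdef]; linarith)
      have h2 : Real.sqrt (S ω) * Real.sqrt (S ω) = S ω := Real.mul_self_sqrt hω.le
      have hu := Real.sqrt_nonneg (S ω)
      simp only [hgdef]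
      nlinarith [mul_le_mul_of_nonneg_right h1 hu]
    have hsubint : Integrable (fun ω => c * Real.sqrt (S ω) - S ω) μ :=
      (hsqrtint.const_mul c).sub hint
    have h3 : (∫ ω, (c * Real.sqrt (S ω) - S ω) ∂μ) ≤ ∫ ω, g b ω ∂μ :=
      integral_mono_ae hsubint (hgint b hbpos.le) hpw
    have h4 : (∫ ω, (c * Real.sqrt (S ω) - S ω) ∂μ) = c * Iq - J := by
      rw [integral_sub (hsqrtint.const_mul c) hint, integral_const_mul]
    have h5 : 4 * Real.pi * D < c * Iq - J := by
      have hcc : c * Iq = 4 * Real.pi * D + J + Iq := by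
        rw [hcdef]; field_simp
      rw [hcc]; linarith
    rw [h4] at h3
    have h6 : 4 * Real.pi * D < ∫ ω, g b ω ∂μ := by linarith
    simp only [hFdef]
    have h7 : (1 / (4 * Real.pi)) * (4 * Real.pi * D) < (1 / (4 * Real.pi)) * ∫ ω, g b ω ∂μ :=
      mul_lt_mul_of_pos_left h6 (by positivity)
    have h8 : (1 / (4 * Real.pi)) * (4 * Real.pi * D) = D := by field_simp
    rw [h8] at h7
    exact h7
  have h2Db : 2 * D < b := by
    by_contra h
    push_neg at h
    rcases lt_or_eq_of_le h with h | h
    · have := hmono (Set.mem_Ici.mpr hbpos.le) (Set.mem_Ici.mpr (by linarith)) h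
      linarith
    · rw [h] at hFb; linarith
  have hIcc : Set.Icc (2 * D) b ⊆ Set.Ici 0 := fun x hx => by
    simp only [Set.mem_Icc] at hx; simp only [Set.mem_Ici]; linarith
  have hivt := intermediate_value_Ioo h2Db.le (hcont.mono hIcc)
  have hDmem : D ∈ Set.Ioo (F (2 * D)) (F b) := ⟨hF2D, hFb⟩
  obtain ⟨α, hαmem, hFα⟩ := hivt hDmem
  simp only [Set.mem_Ioo] at hαmem
  have hαpos : 0 < α := by linarith
  refine ⟨α, ⟨hαpos, ?_⟩, ?_⟩
  · exact hFα.symm.trans (hFeq α).symm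
  · rintro β ⟨hβpos, hβeq⟩
    have hβF : F β = D := by
      rw [hβeq]
      exact (hFeq β).symm
    exact hmono.injOn (Set.mem_Ici.mpr hβpos.le) (Set.mem_Ici.mpr hαpos.le)
      (by rw [hβF, hFα])


end
end

section
/- Let λ_1,…,λ_N be positive reals and define, for α > 0, F(α) = (1/N) Σ_{k=1}^{N} log( (√(λ_k + α) + √λ_k) / √λ_k ) + (1/2) log( (1/(2N)) Σ_{i=1}^{N} λ_i / (√(λ_i² + λ_i α) + λ_i) ). Then F(α) → 0 as α → 0⁺, and F is monotonically increasing on (0,∞). -/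
open Real Filter
open scoped ENNReal NNReal

noncomputable section

-- rewrite lemma
lemma keyEq {N : ℕ} (hN : 0 < N) (lam : Fin N → ℝ) (hlam : ∀ k, 0 < lam k) :
    (fun alpha : ℝ =>
        (1 / N) * ∑ k, Real.log ((Real.sqrt (lam k + alpha) + Real.sqrt (lam k))
            / Real.sqrt (lam k))
          + (1 / 2) * Real.log ((1 / (2 * N)) * ∑ i,
              lam i / (Real.sqrt (lam i ^ 2 + lam i * alpha) + lam i)))
    = (fun alpha : ℝ =>
        ((1 / N) * ∑ k, Real.log (Real.sqrt (lam k + alpha) + Real.sqrt (lam k))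
          + (1 / 2) * Real.log (∑ i,
              Real.sqrt (lam i) / (Real.sqrt (lam i + alpha) + Real.sqrt (lam i))))
        + (-((1 / N) * ∑ k, Real.log (Real.sqrt (lam k)))
            - (1 / 2) * Real.log (2 * N))) := by
  have hNe : Nonempty (Fin N) := ⟨⟨0, hN⟩⟩
  funext alpha
  have hr : ∀ k, 0 < Real.sqrt (lam k) := fun k => Real.sqrt_pos.2 (hlam k)
  have hsr : ∀ k, 0 < Real.sqrt (lam k + alpha) + Real.sqrt (lam k) := fun k =>
    add_pos_of_nonneg_of_pos (Real.sqrt_nonneg _) (hr k)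
  have hterm : ∀ i, lam i / (Real.sqrt (lam i ^ 2 + lam i * alpha) + lam i)
      = Real.sqrt (lam i) / (Real.sqrt (lam i + alpha) + Real.sqrt (lam i)) := by
    intro i
    have h1 : lam i ^ 2 + lam i * alpha = lam i * (lam i + alpha) := by ring
    rw [h1, Real.sqrt_mul (hlam i).le]
    have hd1 : 0 < Real.sqrt (lam i) * Real.sqrt (lam i + alpha) + lam i :=
      add_pos_of_nonneg_of_pos (mul_nonneg (Real.sqrt_nonneg _) (Real.sqrt_nonneg _)) (hlam i)
    rw [div_eq_div_iff (ne_of_gt hd1) (ne_of_gt (hsr i))]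
    nlinarith [Real.mul_self_sqrt (hlam i).le, Real.sqrt_nonneg (lam i + alpha)]
  rw [Finset.sum_congr rfl (fun i _ => hterm i)]
  have hS : 0 < ∑ i, Real.sqrt (lam i) / (Real.sqrt (lam i + alpha) + Real.sqrt (lam i)) :=
    Finset.sum_pos (fun i _ => div_pos (hr i) (hsr i)) Finset.univ_nonempty
  have hN2 : (0:ℝ) < 2 * N := by positivity
  rw [Real.log_mul (by positivity) (ne_of_gt hS), one_div (2 * (N:ℝ)), Real.log_inv]
  have hlog : ∀ k, Real.log ((Real.sqrt (lam k + alpha) + Real.sqrt (lam k)) / Real.sqrt (lam k))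
      = Real.log (Real.sqrt (lam k + alpha) + Real.sqrt (lam k)) - Real.log (Real.sqrt (lam k)) :=
    fun k => Real.log_div (ne_of_gt (hsr k)) (ne_of_gt (hr k))
  rw [Finset.sum_congr rfl (fun k _ => hlog k), Finset.sum_sub_distrib]
  ring

lemma derivAux {N : ℕ} (hN : 0 < N) (lam : Fin N → ℝ) (hlam : ∀ k, 0 < lam k)
    (a : ℝ) (ha : 0 ≤ a) :
    HasDerivAt (fun x : ℝ =>
        (1 / N) * ∑ k, Real.log (Real.sqrt (lam k + x) + Real.sqrt (lam k))
          + (1 / 2) * Real.log (∑ i,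
              Real.sqrt (lam i) / (Real.sqrt (lam i + x) + Real.sqrt (lam i))))
      ((1 / N) * ∑ k, (1 / (2 * Real.sqrt (lam k + a)))
            / (Real.sqrt (lam k + a) + Real.sqrt (lam k))
        + (1 / 2) * ((∑ i, -(Real.sqrt (lam i) / (Real.sqrt (lam i + a) + Real.sqrt (lam i))
              * ((1 / (2 * Real.sqrt (lam i + a))) / (Real.sqrt (lam i + a) + Real.sqrt (lam i)))))
            / (∑ i, Real.sqrt (lam i) / (Real.sqrt (lam i + a) + Real.sqrt (lam i))))) a := by
  have hNe : Nonempty (Fin N) := ⟨⟨0, hN⟩⟩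
  have hpos : ∀ k, 0 < lam k + a := fun k => by linarith [hlam k]
  have hs : ∀ k, 0 < Real.sqrt (lam k + a) := fun k => Real.sqrt_pos.2 (hpos k)
  have hr : ∀ k, 0 < Real.sqrt (lam k) := fun k => Real.sqrt_pos.2 (hlam k)
  have hsr : ∀ k, 0 < Real.sqrt (lam k + a) + Real.sqrt (lam k) := fun k =>
    add_pos (hs k) (hr k)
  have hsq : ∀ k, HasDerivAt (fun x : ℝ => Real.sqrt (lam k + x))
      (1 / (2 * Real.sqrt (lam k + a))) a := by
    intro k
    have h := (Real.hasDerivAt_sqrt (ne_of_gt (hpos k))).comp a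
      ((hasDerivAt_id a).const_add (lam k))
    simpa [Function.comp_def] using h
  have hlogk : ∀ k, HasDerivAt (fun x : ℝ => Real.log (Real.sqrt (lam k + x) + Real.sqrt (lam k)))
      ((1 / (2 * Real.sqrt (lam k + a))) / (Real.sqrt (lam k + a) + Real.sqrt (lam k))) a :=
    fun k => ((hsq k).add_const _).log (ne_of_gt (hsr k))
  have hA : HasDerivAt (fun x : ℝ => ∑ k, Real.log (Real.sqrt (lam k + x) + Real.sqrt (lam k)))
      (∑ k, (1 / (2 * Real.sqrt (lam k + a))) / (Real.sqrt (lam k + a) + Real.sqrt (lam k))) a :=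
    HasDerivAt.fun_sum (fun k _ => hlogk k)
  have hwi : ∀ i, HasDerivAt
      (fun x : ℝ => Real.sqrt (lam i) / (Real.sqrt (lam i + x) + Real.sqrt (lam i)))
      (-(Real.sqrt (lam i) / (Real.sqrt (lam i + a) + Real.sqrt (lam i))
          * ((1 / (2 * Real.sqrt (lam i + a))) / (Real.sqrt (lam i + a) + Real.sqrt (lam i))))) a := by
    intro i
    have h : HasDerivAt (fun x : ℝ => Real.sqrt (lam i) / (Real.sqrt (lam i + x) + Real.sqrt (lam i))) _ a :=
      (hasDerivAt_const a (Real.sqrt (lam i))).fun_div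
      ((hsq i).add_const (Real.sqrt (lam i))) (ne_of_gt (hsr i))
    convert h using 1
    have h1 := (hs i).ne'
    have h2 := (hsr i).ne'
    field_simp
    ring
  have hS : HasDerivAt
      (fun x : ℝ => ∑ i, Real.sqrt (lam i) / (Real.sqrt (lam i + x) + Real.sqrt (lam i)))
      (∑ i, -(Real.sqrt (lam i) / (Real.sqrt (lam i + a) + Real.sqrt (lam i))
          * ((1 / (2 * Real.sqrt (lam i + a))) / (Real.sqrt (lam i + a) + Real.sqrt (lam i))))) a :=
    HasDerivAt.fun_sum (fun i _ => hwi i)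
  have hSpos : 0 < ∑ i, Real.sqrt (lam i) / (Real.sqrt (lam i + a) + Real.sqrt (lam i)) :=
    Finset.sum_pos (fun i _ => div_pos (hr i) (hsr i)) Finset.univ_nonempty
  exact (hA.const_mul (1 / (N:ℝ))).add ((hS.log (ne_of_gt hSpos)).const_mul (1 / 2))

lemma derivNonneg {N : ℕ} (hN : 0 < N) (lam : Fin N → ℝ) (hlam : ∀ k, 0 < lam k)
    (a : ℝ) (ha : 0 ≤ a) :
    0 ≤ (1 / N) * ∑ k, (1 / (2 * Real.sqrt (lam k + a)))
            / (Real.sqrt (lam k + a) + Real.sqrt (lam k))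
        + (1 / 2) * ((∑ i, -(Real.sqrt (lam i) / (Real.sqrt (lam i + a) + Real.sqrt (lam i))
              * ((1 / (2 * Real.sqrt (lam i + a))) / (Real.sqrt (lam i + a) + Real.sqrt (lam i)))))
            / (∑ i, Real.sqrt (lam i) / (Real.sqrt (lam i + a) + Real.sqrt (lam i)))) := by
  have hNe : Nonempty (Fin N) := ⟨⟨0, hN⟩⟩
  set A : Fin N → ℝ := fun k => (1 / (2 * Real.sqrt (lam k + a)))
      / (Real.sqrt (lam k + a) + Real.sqrt (lam k)) with hA
  set W : Fin N → ℝ := fun k => Real.sqrt (lam k) / (Real.sqrt (lam k + a) + Real.sqrt (lam k))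
    with hW
  have hpos : ∀ k, 0 < lam k + a := fun k => by linarith [hlam k]
  have hs : ∀ k, 0 < Real.sqrt (lam k + a) := fun k => Real.sqrt_pos.2 (hpos k)
  have hr : ∀ k, 0 < Real.sqrt (lam k) := fun k => Real.sqrt_pos.2 (hlam k)
  have hsr : ∀ k, 0 < Real.sqrt (lam k + a) + Real.sqrt (lam k) := fun k => add_pos (hs k) (hr k)
  have hApos : ∀ k, 0 < A k := fun k => div_pos (div_pos one_pos (mul_pos two_pos (hs k))) (hsr k)
  have hWpos : ∀ k, 0 < W k := fun k => div_pos (hr k) (hsr k)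
  have hSpos : 0 < ∑ i, W i := Finset.sum_pos (fun i _ => hWpos i) Finset.univ_nonempty
  have hAsum : 0 < ∑ k, A k := Finset.sum_pos (fun i _ => hApos i) Finset.univ_nonempty
  -- monotonicity facts
  have hmono : ∀ i j, lam i ≤ lam j → W i ≤ W j ∧ A j ≤ A i := by
    intro i j hij
    have hrij : Real.sqrt (lam i) ≤ Real.sqrt (lam j) := Real.sqrt_le_sqrt hij
    have hsij : Real.sqrt (lam i + a) ≤ Real.sqrt (lam j + a) :=
      Real.sqrt_le_sqrt (by linarith)
    constructor
    · rw [hW]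
      dsimp only
      rw [div_le_div_iff₀ (hsr i) (hsr j)]
      have h1 : Real.sqrt (lam i) * Real.sqrt (lam j + a)
          ≤ Real.sqrt (lam j) * Real.sqrt (lam i + a) := by
        rw [← Real.sqrt_mul (hlam i).le, ← Real.sqrt_mul (hlam j).le]
        exact Real.sqrt_le_sqrt (by nlinarith [hlam i, hlam j])
      nlinarith [hr i, hr j]
    · rw [hA]
      dsimp only
      apply div_le_div₀ (by positivity)
      · apply one_div_le_one_div_of_le (mul_pos two_pos (hs i))
        linarith
      · exact hsr i
      · linarith
  -- Chebyshev
  have hanti : Antivary A W := by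
    intro i j hWij
    rcases le_total (lam i) (lam j) with h | h
    · exact (hmono i j h).2
    · exact absurd hWij (not_lt.2 (hmono j i h).1)
  have hcheb : (Fintype.card (Fin N) : ℝ) * ∑ i, A i * W i ≤ (∑ i, A i) * ∑ i, W i :=
    hanti.card_mul_sum_le_sum_mul_sum
  rw [Fintype.card_fin] at hcheb
  -- rewrite sum of negatives
  have hneg : (∑ i, -(W i * A i)) = -(∑ i, W i * A i) := by
    rw [← Finset.sum_neg_distrib]
  have hN' : (0:ℝ) < N := by exact_mod_cast hN
  have key : (∑ i, W i * A i) / (∑ i, W i) ≤ (2 / (N:ℝ)) * ∑ k, A k := by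
    have hcomm : (∑ i, W i * A i) = ∑ i, A i * W i :=
      Finset.sum_congr rfl (fun i _ => mul_comm _ _)
    rw [hcomm, div_le_iff₀ hSpos, div_mul_eq_mul_div, div_mul_eq_mul_div, le_div_iff₀ hN']
    nlinarith [hcheb, mul_pos hAsum hSpos]
  have heq : (1/2) * ((2:ℝ) / N * ∑ k, A k) = 1 / (N:ℝ) * ∑ k, A k := by ring
  rw [hneg, neg_div, mul_neg]
  nlinarith [key, heq]

lemma valZero {N : ℕ} (hN : 0 < N) (lam : Fin N → ℝ) (hlam : ∀ k, 0 < lam k) :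
    ((1 / (N:ℝ)) * ∑ k, Real.log (Real.sqrt (lam k + 0) + Real.sqrt (lam k))
      + (1 / 2) * Real.log (∑ i,
          Real.sqrt (lam i) / (Real.sqrt (lam i + 0) + Real.sqrt (lam i))))
    + (-((1 / (N:ℝ)) * ∑ k, Real.log (Real.sqrt (lam k)))
        - (1 / 2) * Real.log (2 * N)) = 0 := by
  have hr : ∀ k, 0 < Real.sqrt (lam k) := fun k => Real.sqrt_pos.2 (hlam k)
  have hN' : (0:ℝ) < N := by exact_mod_cast hN
  simp only [add_zero]
  have h1 : ∀ k : Fin N, Real.log (Real.sqrt (lam k) + Real.sqrt (lam k))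
      = Real.log 2 + Real.log (Real.sqrt (lam k)) := by
    intro k
    rw [← two_mul, Real.log_mul two_ne_zero (ne_of_gt (hr k))]
  rw [Finset.sum_congr rfl (fun k _ => h1 k), Finset.sum_add_distrib, Finset.sum_const,
    Finset.card_univ, Fintype.card_fin]
  have h2 : (∑ i, Real.sqrt (lam i) / (Real.sqrt (lam i) + Real.sqrt (lam i))) = (N:ℝ) / 2 := by
    have h3 : ∀ i : Fin N, Real.sqrt (lam i) / (Real.sqrt (lam i) + Real.sqrt (lam i)) = 1/2 := by
      intro i
      have hne : Real.sqrt (lam i) ≠ 0 := ne_of_gt (hr i)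
      rw [← two_mul]
      field_simp
    rw [Finset.sum_congr rfl (fun i _ => h3 i), Finset.sum_const, Finset.card_univ,
      Fintype.card_fin, nsmul_eq_mul]
    ring
  rw [h2, Real.log_div (ne_of_gt hN') two_ne_zero,
    Real.log_mul two_ne_zero (ne_of_gt hN'), nsmul_eq_mul]
  field_simp
  ring

/-- The rate-loss function
`F(α) = (1/N) Σ_k log((√(λ_k+α) + √λ_k)/√λ_k) + (1/2) log((1/(2N)) Σ_i λ_i/(√(λ_i²+λ_iα)+λ_i))`
tends to `0` as `α → 0⁺` and is monotonically increasing on `(0,∞)`. -/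
theorem stmt16 {N : ℕ} (hN : 0 < N) (lam : Fin N → ℝ) (hlam : ∀ k, 0 < lam k) :
    Filter.Tendsto
      (fun alpha : ℝ =>
        (1 / N) * ∑ k, Real.log ((Real.sqrt (lam k + alpha) + Real.sqrt (lam k))
            / Real.sqrt (lam k))
          + (1 / 2) * Real.log ((1 / (2 * N)) * ∑ i,
              lam i / (Real.sqrt (lam i ^ 2 + lam i * alpha) + lam i)))
      (nhdsWithin 0 (Set.Ioi 0)) (nhds 0) ∧
    MonotoneOn
      (fun alpha : ℝ =>
        (1 / N) * ∑ k, Real.log ((Real.sqrt (lam k + alpha) + Real.sqrt (lam k))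
            / Real.sqrt (lam k))
          + (1 / 2) * Real.log ((1 / (2 * N)) * ∑ i,
              lam i / (Real.sqrt (lam i ^ 2 + lam i * alpha) + lam i)))
      (Set.Ioi 0) := by
  rw [keyEq hN lam hlam]
  have hD : ∀ a : ℝ, 0 ≤ a → HasDerivAt (fun alpha : ℝ =>
        ((1 / N) * ∑ k, Real.log (Real.sqrt (lam k + alpha) + Real.sqrt (lam k))
          + (1 / 2) * Real.log (∑ i,
              Real.sqrt (lam i) / (Real.sqrt (lam i + alpha) + Real.sqrt (lam i))))
        + (-((1 / N) * ∑ k, Real.log (Real.sqrt (lam k)))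
            - (1 / 2) * Real.log (2 * N)))
      ((1 / N) * ∑ k, (1 / (2 * Real.sqrt (lam k + a)))
            / (Real.sqrt (lam k + a) + Real.sqrt (lam k))
        + (1 / 2) * ((∑ i, -(Real.sqrt (lam i) / (Real.sqrt (lam i + a) + Real.sqrt (lam i))
              * ((1 / (2 * Real.sqrt (lam i + a))) / (Real.sqrt (lam i + a) + Real.sqrt (lam i)))))
            / (∑ i, Real.sqrt (lam i) / (Real.sqrt (lam i + a) + Real.sqrt (lam i))))) a :=
    fun a ha => (derivAux hN lam hlam a ha).add_const _
  constructor
  · have hcont := (hD 0 le_rfl).continuousAt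
    have htend := hcont.continuousWithinAt (s := Set.Ioi 0)
    have h0 := valZero hN lam hlam
    convert htend.tendsto using 2
    exact h0.symm
  · apply monotoneOn_of_deriv_nonneg (convex_Ioi 0)
    · intro x hx
      exact ((hD x (le_of_lt hx)).continuousAt).continuousWithinAt
    · intro x hx
      rw [interior_Ioi] at hx
      exact (hD x (le_of_lt hx)).differentiableAt.differentiableWithinAt
    · intro x hx
      rw [interior_Ioi] at hx
      rw [(hD x (le_of_lt hx)).deriv]
      exact derivNonneg hN lam hlam x (le_of_lt hx)

end
end

section
/- Let K_X be a real symmetric positive-definite N×N matrix with eigenvalues λ_1,…,λ_N, let α > 0, and set K_{Z*} = (1/2)√(K_X² + α K_X) − (1/2) K_X. Then tr( (K_X + K_{Z*})^{-1} K_{Z*} K_X ) = (1/α) Σ_{k=1}^{N} ( √(λ_k² + λ_k α) − λ_k )², and tr(K_{Z*}) > tr( (K_X + K_{Z*})^{-1} K_{Z*} K_X ); that is, Wiener post-filtering strictly reduces the distortion below tr(K_{Z*}). -/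
open Real Filter
open scoped ENNReal NNReal

noncomputable section

/-- With `K_{Z*} = (1/2)√(K_X² + α K_X) - (1/2)K_X` (where `S` is the PSD
square root of `K_X² + α K_X`), the Wiener post-filtered distortion satisfies
`tr((K_X + K_{Z*})⁻¹ K_{Z*} K_X) = (1/α) Σ_k (√(λ_k² + λ_k α) - λ_k)²`, and it is strictly
smaller than `tr K_{Z*}`. -/
theorem stmt19 {N : ℕ} (hN : 0 < N)
    (K_X : Matrix (Fin N) (Fin N) ℝ) (hK : K_X.PosDef)
    (alpha : ℝ) (halpha : 0 < alpha)
    (S : Matrix (Fin N) (Fin N) ℝ) (hS : S.PosSemidef)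
    (hS2 : S * S = K_X ^ 2 + alpha • K_X) :
    ((K_X + ((1 / 2 : ℝ) • S - (1 / 2 : ℝ) • K_X))⁻¹
        * ((1 / 2 : ℝ) • S - (1 / 2 : ℝ) • K_X) * K_X).trace
      = (1 / alpha) * ∑ k, (Real.sqrt (hK.1.eigenvalues k ^ 2 + hK.1.eigenvalues k * alpha)
          - hK.1.eigenvalues k) ^ 2 ∧
    ((K_X + ((1 / 2 : ℝ) • S - (1 / 2 : ℝ) • K_X))⁻¹
        * ((1 / 2 : ℝ) • S - (1 / 2 : ℝ) • K_X) * K_X).trace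
      < ((1 / 2 : ℝ) • S - (1 / 2 : ℝ) • K_X).trace := by
  have hne : Nonempty (Fin N) := Fin.pos_iff_nonempty.mp hN
  set lam := hK.1.eigenvalues with hlam
  set U : Matrix (Fin N) (Fin N) ℝ :=
    (Matrix.IsHermitian.eigenvectorUnitary hK.1 : Matrix (Fin N) (Fin N) ℝ) with hUdef
  have hU : star U * U = 1 :=
    (Unitary.mem_iff.mp (Matrix.IsHermitian.eigenvectorUnitary hK.1).2).1
  have hU' : U * star U = 1 :=
    (Unitary.mem_iff.mp (Matrix.IsHermitian.eigenvectorUnitary hK.1).2).2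
  set C : (Fin N → ℝ) → Matrix (Fin N) (Fin N) ℝ :=
    fun d => U * Matrix.diagonal d * star U with hCdef
  have hCm : ∀ d e : Fin N → ℝ, C d * C e = C (d * e) := by
    intro d e
    simp only [hCdef]
    calc U * Matrix.diagonal d * star U * (U * Matrix.diagonal e * star U)
        = U * Matrix.diagonal d * (star U * U) * Matrix.diagonal e * star U := by
          simp only [Matrix.mul_assoc]
      _ = U * (Matrix.diagonal d * Matrix.diagonal e) * star U := by
          rw [hU]; simp only [Matrix.mul_one, Matrix.mul_assoc]
      _ = _ := by rw [Matrix.diagonal_mul_diagonal]; rfl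
  have hCt : ∀ d : Fin N → ℝ, (C d).trace = ∑ k, d k := by
    intro d
    simp only [hCdef]
    rw [Matrix.trace_mul_cycle, hU, Matrix.one_mul, Matrix.trace_diagonal]
  have hCadd : ∀ d e : Fin N → ℝ, C d + C e = C (d + e) := by
    intro d e
    have h : Matrix.diagonal (d + e) = Matrix.diagonal d + Matrix.diagonal e := by
      rw [Matrix.diagonal_add]
      rfl
    simp only [hCdef, h]
    noncomm_ring
  have hCsmul : ∀ (c : ℝ) (d : Fin N → ℝ), c • C d = C (c • d) := by
    intro c d
    simp only [hCdef, Matrix.diagonal_smul, Matrix.smul_mul, Matrix.mul_smul]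
  have hCsub : ∀ d e : Fin N → ℝ, C d - C e = C (d - e) := by
    intro d e
    have h : Matrix.diagonal (d - e) = Matrix.diagonal d - Matrix.diagonal e := by
      rw [Matrix.diagonal_sub]
      rfl
    simp only [hCdef, h]
    noncomm_ring
  have hCinv : ∀ d : Fin N → ℝ, (∀ k, d k ≠ 0) → (C d)⁻¹ = C d⁻¹ := by
    intro d hd
    apply Matrix.inv_eq_right_inv
    rw [hCm]
    have hdd : d * d⁻¹ = 1 := by
      funext k
      exact mul_inv_cancel₀ (hd k)
    simp only [hCdef, hdd]
    show U * Matrix.diagonal (fun _ => (1 : ℝ)) * star U = 1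
    rw [Matrix.diagonal_one, Matrix.mul_one, hU']
  have hKX : K_X = C lam := by
    have h := hK.1.spectral_theorem
    simp only [RCLike.ofReal_real_eq_id, Function.comp_id] at h
    exact h
  have hlampos : ∀ k, 0 < lam k := fun k => hK.eigenvalues_pos k
  set e : Fin N → ℝ := fun k => Real.sqrt (lam k ^ 2 + lam k * alpha) with hedef
  have he2 : ∀ k, e k ^ 2 = lam k ^ 2 + lam k * alpha := by
    intro k
    exact Real.sq_sqrt (by nlinarith [hlampos k])
  have helt : ∀ k, lam k < e k := by
    intro k
    have : Real.sqrt (lam k ^ 2) < Real.sqrt (lam k ^ 2 + lam k * alpha) :=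
      Real.sqrt_lt_sqrt (by positivity) (by nlinarith [hlampos k])
    rwa [Real.sqrt_sq (hlampos k).le] at this
  have hCe_psd : (C e).PosSemidef := by
    have hdiag : (Matrix.diagonal e).PosSemidef :=
      Matrix.posSemidef_diagonal_iff.mpr fun k => Real.sqrt_nonneg _
    simpa [hCdef, Matrix.star_eq_conjTranspose] using hdiag.mul_mul_conjTranspose_same U
  have hSe : C e = S := by
    refine (open scoped MatrixOrder in (CFC.sq_eq_sq_iff (C e) S hCe_psd.nonneg hS.nonneg).mp ?_)
    rw [pow_two, pow_two, hCm, hS2, hKX, pow_two, hCm, hCsmul, hCadd]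
    have hee : e * e = lam * lam + alpha • lam := by
      funext k
      show e k * e k = lam k * lam k + alpha * lam k
      nlinarith [he2 k]
    rw [hee]
  -- the diagonal functions
  set f : Fin N → ℝ := fun k => (1 / 2) * e k - (1 / 2) * lam k with hfdef
  set g : Fin N → ℝ := fun k => lam k + f k with hgdef
  have hfpos : ∀ k, 0 < f k := by
    intro k; simp only [hfdef]; linarith [helt k]
  have hgpos : ∀ k, 0 < g k := by
    intro k; simp only [hgdef]; linarith [hfpos k, hlampos k]
  have hKZ : (1 / 2 : ℝ) • S - (1 / 2 : ℝ) • K_X = C f := by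
    rw [← hSe, hKX, hCsmul, hCsmul, hCsub]
    congr 1
  have hsum : K_X + ((1 / 2 : ℝ) • S - (1 / 2 : ℝ) • K_X) = C g := by
    rw [hKZ, hKX, hCadd]
    rfl
  have hprod : (K_X + ((1 / 2 : ℝ) • S - (1 / 2 : ℝ) • K_X))⁻¹
      * ((1 / 2 : ℝ) • S - (1 / 2 : ℝ) • K_X) * K_X = C (g⁻¹ * f * lam) := by
    rw [hsum, hKZ, hKX, hCinv g (fun k => (hgpos k).ne'), hCm, hCm]
  have htr : ((K_X + ((1 / 2 : ℝ) • S - (1 / 2 : ℝ) • K_X))⁻¹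
      * ((1 / 2 : ℝ) • S - (1 / 2 : ℝ) • K_X) * K_X).trace
      = ∑ k, (g k)⁻¹ * f k * lam k := by
    rw [hprod, hCt]
    simp [Pi.mul_apply]
  constructor
  · rw [htr, Finset.mul_sum]
    refine Finset.sum_congr rfl fun k _ => ?_
    show (g k)⁻¹ * f k * lam k = 1 / alpha * (e k - lam k) ^ 2
    have hga : g k = (lam k + e k) / 2 := by
      show lam k + (1 / 2 * e k - 1 / 2 * lam k) = (lam k + e k) / 2
      ring
    have hfa : f k = (e k - lam k) / 2 := by
      show 1 / 2 * e k - 1 / 2 * lam k = (e k - lam k) / 2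
      ring
    rw [hga, hfa]
    have h1 : lam k + e k ≠ 0 := by nlinarith [hlampos k, helt k]
    field_simp
    linear_combination (lam k - e k) * he2 k
  · rw [htr, hKZ, hCt]
    refine Finset.sum_lt_sum_of_nonempty Finset.univ_nonempty fun k _ => ?_
    have hgk := hgpos k
    have hfk := hfpos k
    have hlk := hlampos k
    have hek := helt k
    have hg : g k = lam k + f k := rfl
    have hinv : g k * (g k)⁻¹ = 1 := mul_inv_cancel₀ hgk.ne'
    have hlg : lam k < g k := by
      rw [hg]; linarith
    calc (g k)⁻¹ * f k * lam k < (g k)⁻¹ * f k * g k := by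
          have : 0 < (g k)⁻¹ * f k := by positivity
          exact (mul_lt_mul_iff_right₀ this).mpr hlg
      _ = f k := by field_simp

end
end
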